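/- Let d ≥ 1, let g : Fin d → ℝ with g i ≥ 0 for all i, and let U ∈ Matrix.unitaryGroup (Fin d) ℂ. Define the vector ψ indexed by Fin d × Fin d by ψ(i,j) = g(i) · U[j,i] (the Schmidt-decomposed bipartite pure state Σ_i g_i |i⟩ ⊗ U|i⟩), and let Ψ := ψψ† be the associated rank-one matrix. Then for every t ≥ 1 and all permutations π, σ of Fin t, Tr[(W_π ⊗ W_σ) · R] equals the product, over the orbits O of the permutation σ∘π⁻¹ acting on Fin t, of Σ_{i : Fin d} g(i)^{2|O|}, where R is the reindexed t-fold Kronecker power Ψ^{⊗t}. (Paper's Proposition 12: the bipartite permutation moments of a pure state are products of Schmidt-coefficient power sums determined by the cycle structure of σπ⁻¹.) -/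

import Mathlib

open Matrix Kronecker

noncomputable section

/-- Permutation operator `W_π` of local index `I`: `W_π[b,a] = 1` iff `b = a ∘ π`. -/
def permOp (I : Type*) [DecidableEq I] {t : ℕ} (π : Equiv.Perm (Fin t)) :
    Matrix (Fin t → I) (Fin t → I) ℂ :=
  Matrix.of fun b a => if b = a ∘ ⇑π then 1 else 0

/-- `t`-fold Kronecker power of a matrix. -/
def kpow {I : Type*} (M : Matrix I I ℂ) (t : ℕ) :
    Matrix (Fin t → I) (Fin t → I) ℂ :=
  Matrix.of fun a b => ∏ i, M (a i) (b i)

/-- The Schmidt-decomposed bipartite pure vector `ψ(i,j) = g i · U[j,i]`. -/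
def schmidtVec (d : ℕ) (g : Fin d → ℝ) (U : Matrix.unitaryGroup (Fin d) ℂ) :
    Fin d × Fin d → ℂ :=
  fun p => (g p.1 : ℂ) * (U : Matrix (Fin d) (Fin d) ℂ) p.2 p.1

/-- The rank-one matrix `ψψ†`. -/
def schmidtProj (d : ℕ) (g : Fin d → ℝ) (U : Matrix.unitaryGroup (Fin d) ℂ) :
    Matrix (Fin d × Fin d) (Fin d × Fin d) ℂ :=
  Matrix.of fun x y => schmidtVec d g U x * (starRingEnd ℂ) (schmidtVec d g U y)

open scoped Classical in
lemma aux_orbit_card {t : ℕ} (τ : Equiv.Perm (Fin t))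
    (O : MulAction.orbitRel.Quotient (Subgroup.zpowers τ) (Fin t)) :
    O.orbit.ncard = (Finset.univ.filter
      (fun i : Fin t => (Quotient.mk'' i :
        MulAction.orbitRel.Quotient (Subgroup.zpowers τ) (Fin t)) = O)).card := by
  classical
  rw [Set.ncard_eq_toFinset_card']
  have : O.orbit.toFinset = Finset.univ.filter
      (fun i : Fin t => (Quotient.mk'' i :
        MulAction.orbitRel.Quotient (Subgroup.zpowers τ) (Fin t)) = O) := by
    ext i
    simp [MulAction.orbitRel.Quotient.mem_orbit]
  rw [this]

lemma aux_key {d t : ℕ} (τ : Equiv.Perm (Fin t)) (h : Fin d → ℂ) :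
    ∑ a : Fin t → Fin d, (if ∀ i, a (τ i) = a i then ∏ i, h (a i) else 0)
      = ∏ᶠ O : MulAction.orbitRel.Quotient (Subgroup.zpowers τ) (Fin t),
          ∑ i : Fin d, (h i) ^ O.orbit.ncard := by
  classical
  set Q := MulAction.orbitRel.Quotient (Subgroup.zpowers τ) (Fin t) with hQ
  haveI : Fintype Q := Fintype.ofFinite Q
  have hconst : ∀ (a : Fin t → Fin d), (∀ i, a (τ i) = a i) →
      ∀ x y : Fin t, (Quotient.mk'' x : Q) = Quotient.mk'' y → a x = a y := by
    intro a ha x y hxy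
    have h1 : ∀ n : ℤ, ∀ x, a ((τ ^ n) x) = a x := by
      have hinv : ∀ x, a (τ⁻¹ x) = a x := by
        intro x
        have := ha (τ⁻¹ x)
        simpa using this.symm
      intro n
      induction n using Int.induction_on with
      | zero => simp
      | succ k ih =>
          intro x
          rw [_root_.zpow_add, zpow_one]
          simp only [Equiv.Perm.mul_apply]
          rw [ih (τ x), ha x]
      | pred k ih =>
          intro x
          rw [_root_.zpow_sub, zpow_one]
          simp only [Equiv.Perm.mul_apply]
          rw [ih (τ⁻¹ x), hinv x]
    have hrel : (MulAction.orbitRel (Subgroup.zpowers τ) (Fin t)) x y := Quotient.eq''.mp hxy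
    obtain ⟨⟨g, n, rfl⟩, hgx⟩ := hrel
    rw [← hgx]
    exact h1 n y
  rw [finprod_eq_prod_of_fintype]
  rw [← Finset.sum_filter]
  rw [show (∏ O : Q, ∑ i : Fin d, h i ^ O.orbit.ncard)
      = ∑ c ∈ Fintype.piFinset (fun _ : Q => (Finset.univ : Finset (Fin d))),
          ∏ O : Q, h (c O) ^ O.orbit.ncard from Finset.prod_univ_sum _ _]
  rw [Fintype.piFinset_univ]
  refine Finset.sum_nbij' (fun a => fun O : Q => a O.out) (fun c => fun x => c (Quotient.mk'' x))
    ?_ ?_ ?_ ?_ ?_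
  · intro a _; exact Finset.mem_univ _
  · intro c _
    simp only [Finset.mem_filter, Finset.mem_univ, true_and]
    intro i
    have : (Quotient.mk'' (τ i) : Q) = Quotient.mk'' i :=
      Quotient.sound' ⟨⟨τ, Subgroup.mem_zpowers τ⟩, rfl⟩
    rw [this]
  · intro a ha
    dsimp only
    funext x
    simp only [Finset.mem_filter, Finset.mem_univ, true_and] at ha
    exact hconst a ha _ _ (Quotient.out_eq' _)
  · intro c _
    dsimp only
    funext O
    rw [Quotient.out_eq']
  · intro a ha
    dsimp only
    simp only [Finset.mem_filter, Finset.mem_univ, true_and] at ha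
    rw [← Finset.prod_fiberwise Finset.univ (fun i : Fin t => (Quotient.mk'' i : Q))
      (fun i => h (a i))]
    refine Finset.prod_congr rfl (fun O _ => ?_)
    rw [aux_orbit_card τ O, ← Finset.prod_const]
    refine Finset.prod_congr rfl (fun i hi => ?_)
    simp only [Finset.mem_filter, Finset.mem_univ, true_and] at hi
    congr 1
    exact hconst a ha _ _ (by rw [hi, Quotient.out_eq'])

lemma aux_trace (d : ℕ) (Ψ : Matrix (Fin d × Fin d) (Fin d × Fin d) ℂ) (t : ℕ)
    (π σ : Equiv.Perm (Fin t)) :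
    ((permOp (Fin d) π ⊗ₖ permOp (Fin d) σ) *
        Matrix.reindex (Equiv.arrowProdEquivProdArrow (Fin t) (fun _ => Fin d) (fun _ => Fin d))
          (Equiv.arrowProdEquivProdArrow (Fin t) (fun _ => Fin d) (fun _ => Fin d))
          (kpow Ψ t)).trace =
    ∑ a : Fin t → Fin d, ∑ b : Fin t → Fin d,
      ∏ i, Ψ (a i, b i) (a (π i), b (σ i)) := by
  classical
  rw [Matrix.trace]
  simp only [Matrix.diag, Matrix.mul_apply]
  rw [Finset.sum_comm]
  simp only [kroneckerMap_apply, permOp, Matrix.of_apply]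
  have step : ∀ y : (Fin t → Fin d) × (Fin t → Fin d),
      (∑ x : (Fin t → Fin d) × (Fin t → Fin d),
        (if x.1 = y.1 ∘ ⇑π then (1:ℂ) else 0) * (if x.2 = y.2 ∘ ⇑σ then 1 else 0) *
          (Matrix.reindex (Equiv.arrowProdEquivProdArrow (Fin t) (fun _ => Fin d) (fun _ => Fin d))
            (Equiv.arrowProdEquivProdArrow (Fin t) (fun _ => Fin d) (fun _ => Fin d)) (kpow Ψ t)) y x)
      = ∏ i, Ψ (y.1 i, y.2 i) (y.1 (π i), y.2 (σ i)) := by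
    intro y
    rw [Fintype.sum_prod_type]
    simp only [ite_mul, one_mul, zero_mul, mul_ite, mul_zero, mul_one]
    rw [Finset.sum_eq_single (y.1 ∘ ⇑π)]
    · rw [Finset.sum_eq_single (y.2 ∘ ⇑σ)]
      · simp [Matrix.reindex_apply, Matrix.submatrix_apply, kpow,
          Equiv.arrowProdEquivProdArrow]
      · intro b _ hb; simp [hb]
      · intro hmem; exact absurd (Finset.mem_univ _) hmem
    · intro x1 _ hx1; simp [hx1]
    · intro hmem; exact absurd (Finset.mem_univ _) hmem
  rw [Finset.sum_congr rfl (fun y _ => step y), Fintype.sum_prod_type]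

lemma aux_bsum (d t : ℕ) (g : Fin d → ℝ) (U : Matrix.unitaryGroup (Fin d) ℂ)
    (π σ : Equiv.Perm (Fin t)) (a : Fin t → Fin d) :
    (∑ b : Fin t → Fin d, ∏ i,
      ((g (a i) : ℂ) * (U : Matrix (Fin d) (Fin d) ℂ) (b i) (a i)) *
        (starRingEnd ℂ) ((g (a (π i)) : ℂ) * (U : Matrix (Fin d) (Fin d) ℂ) (b (σ i)) (a (π i))))
    = (if ∀ i, a ((σ * π⁻¹) i) = a i then ∏ i, ((g (a i) : ℂ))^2 else 0) := by
  classical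
  set V : Matrix (Fin d) (Fin d) ℂ := (U : Matrix (Fin d) (Fin d) ℂ) with hV
  have unit : ∀ x y : Fin d, (∑ k, V k y * (starRingEnd ℂ) (V k x)) = if x = y then (1:ℂ) else 0 := by
    intro x y
    have h1 : (star V * V) x y = (1 : Matrix (Fin d) (Fin d) ℂ) x y := by
      rw [U.prop.1]
    rw [Matrix.mul_apply, Matrix.one_apply] at h1
    rw [← h1]
    refine Finset.sum_congr rfl (fun k _ => ?_)
    rw [Matrix.star_apply]
    exact mul_comm _ _
  have factor : ∀ b : Fin t → Fin d,
      (∏ i, ((g (a i) : ℂ) * V (b i) (a i)) *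
        (starRingEnd ℂ) ((g (a (π i)) : ℂ) * V (b (σ i)) (a (π i))))
      = (∏ i, ((g (a i) : ℂ))^2) *
        ∏ i, (V (b i) (a i) * (starRingEnd ℂ) (V (b i) (a (π (σ⁻¹ i))))) := by
    intro b
    have e1 : ∀ i, ((g (a i) : ℂ) * V (b i) (a i)) *
        (starRingEnd ℂ) ((g (a (π i)) : ℂ) * V (b (σ i)) (a (π i)))
        = ((g (a i) : ℂ) * (g (a (π i)) : ℂ)) *
          (V (b i) (a i) * (starRingEnd ℂ) (V (b (σ i)) (a (π i)))) := by
      intro i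
      simp only [_root_.map_mul, Complex.conj_ofReal]
      ring
    rw [Finset.prod_congr rfl (fun i _ => e1 i), Finset.prod_mul_distrib]
    congr 1
    · rw [Finset.prod_mul_distrib, Equiv.prod_comp π (fun j => (g (a j) : ℂ)),
        ← Finset.prod_mul_distrib]
      exact Finset.prod_congr rfl (fun i _ => (sq _).symm)
    · rw [Finset.prod_mul_distrib]
      have := Equiv.prod_comp σ (fun i => (starRingEnd ℂ) (V (b i) (a (π (σ⁻¹ i)))))
      simp only [show ∀ x, σ⁻¹ (σ x) = x from fun x => Equiv.Perm.inv_eq_iff_eq.mpr rfl] at this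
      rw [this, ← Finset.prod_mul_distrib]
  simp only [factor]
  rw [← Finset.mul_sum]
  have swap : (∑ b : Fin t → Fin d, ∏ i, (V (b i) (a i) *
      (starRingEnd ℂ) (V (b i) (a (π (σ⁻¹ i))))))
      = ∏ i, ∑ k, (V k (a i) * (starRingEnd ℂ) (V k (a (π (σ⁻¹ i))))) := by
    rw [Finset.prod_univ_sum (fun _ => (Finset.univ : Finset (Fin d)))]
    rw [Fintype.piFinset_univ]
  rw [swap]
  simp only [unit]
  rw [Finset.prod_boole]
  have hcond : (∀ i ∈ Finset.univ, a (π (σ⁻¹ i)) = a i) ↔ (∀ i, a ((σ * π⁻¹) i) = a i) := by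
    constructor
    · intro hA i
      have := hA ((σ * π⁻¹) i) (Finset.mem_univ _)
      simp only [Equiv.Perm.mul_apply] at this ⊢
      simpa using this.symm
    · intro hB i
      have := hB (π (σ⁻¹ i))
      simp only [Equiv.Perm.mul_apply] at this
      simpa using this.symm
  by_cases hc : ∀ i, a ((σ * π⁻¹) i) = a i
  · rw [if_pos (hcond.mpr hc), if_pos hc, mul_one]
  · rw [if_neg (fun h => hc (hcond.mp h)), if_neg hc, mul_zero]

theorem stmt_12 (d : ℕ) (hd : 1 ≤ d) (g : Fin d → ℝ) (hg : ∀ i, 0 ≤ g i)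
    (U : Matrix.unitaryGroup (Fin d) ℂ) (t : ℕ) (ht : 1 ≤ t)
    (π σ : Equiv.Perm (Fin t)) :
    ((permOp (Fin d) π ⊗ₖ permOp (Fin d) σ) *
        Matrix.reindex (Equiv.arrowProdEquivProdArrow (Fin t) (fun _ => Fin d) (fun _ => Fin d))
          (Equiv.arrowProdEquivProdArrow (Fin t) (fun _ => Fin d) (fun _ => Fin d))
          (kpow (schmidtProj d g U) t)).trace =
      ∏ᶠ O : MulAction.orbitRel.Quotient (Subgroup.zpowers (σ * π⁻¹)) (Fin t),
        ∑ i : Fin d, ((g i : ℂ)) ^ (2 * O.orbit.ncard) := by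
  classical
  rw [aux_trace]
  have inner : ∀ a : Fin t → Fin d,
      (∑ b : Fin t → Fin d, ∏ i, schmidtProj d g U (a i, b i) (a (π i), b (σ i)))
      = (if ∀ i, a ((σ * π⁻¹) i) = a i then ∏ i, ((g (a i) : ℂ))^2 else 0) := by
    intro a
    rw [← aux_bsum d t g U π σ a]
    simp only [schmidtProj, schmidtVec, Matrix.of_apply]
  rw [Finset.sum_congr rfl (fun a _ => inner a)]
  rw [aux_key (σ * π⁻¹) (fun i => ((g i : ℂ))^2)]
  exact finprod_congr (fun O => Finset.sum_congr rfl (fun i _ => by rw [pow_mul]))
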